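/- Let R be a unique factorization domain and let U ∈ R[x,y] be an (n,r)-Brylawski polynomial with constant c ∈ R∖{0}. If V ∈ R[x,y] involves only the variable x (i.e. deg_y V = 0) and V divides U in R[x,y], then there exist a ∈ R∖{0} and k, ℓ ∈ ℕ such that V = a·(x−1)^k·x^ℓ. Likewise, if V involves only the variable y and V divides U, then V = b·(y−1)^k·y^ℓ for some b ∈ R∖{0} and k, ℓ ∈ ℕ. -/

import Mathlib

open Polynomial

/-- Evaluation `U(Y/(Y−1), Y)` in the rational function field over the fraction field of `R`. -/
noncomputable def brylEval (R : Type*) [CommRing R] [IsDomain R]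
    (U : Polynomial (Polynomial R)) : RatFunc (FractionRing R) :=
  Polynomial.eval₂
    ((algebraMap (Polynomial (FractionRing R)) (RatFunc (FractionRing R))).comp
      (Polynomial.mapRingHom (algebraMap R (FractionRing R))))
    (RatFunc.X / (RatFunc.X - 1)) U

/-- `U ∈ (R[y])[x]` is an `(n,r)`-Brylawski polynomial with constant `c`, i.e.
`(Y−1)^r · U(Y/(Y−1), Y) = c·Y^n` holds in `K(Y)`, `K` the fraction field of `R`. -/
noncomputable def IsBrylawski (R : Type*) [CommRing R] [IsDomain R] (n : ℕ) (r : ℤ) (c : R)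
    (U : Polynomial (Polynomial R)) : Prop :=
  (RatFunc.X - 1 : RatFunc (FractionRing R)) ^ r * brylEval R U
    = RatFunc.C (algebraMap R (FractionRing R) c) * RatFunc.X ^ n

/-- `deg_y` of a bivariate polynomial in `(R[y])[x]`: the largest `j` such that some
coefficient `u_{i,j}` is nonzero. -/
noncomputable def degY {R : Type*} [CommRing R] (U : Polynomial (Polynomial R)) : ℕ :=
  U.support.sup fun i => (U.coeff i).natDegree
section Aux

variable {K : Type*} [Field K]

lemma ratX1_ne : (RatFunc.X - 1 : RatFunc K) ≠ 0 := by
  have h : (algebraMap (Polynomial K) (RatFunc K)) (X - 1) ≠ 0 := by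
    rw [(map_ne_zero_iff _ (RatFunc.algebraMap_injective K))]
    simpa using X_sub_C_ne_zero (1 : K)
  simpa [map_sub, RatFunc.algebraMap_X] using h

/-- homogenization of a bivariate polynomial at level `d`. -/
noncomputable def Hb (B : Polynomial (Polynomial K)) (d : ℕ) : Polynomial K :=
  ∑ i ∈ B.support, B.coeff i * X ^ i * (X - 1) ^ (d - i)

/-- homogenization of a univariate polynomial at level `d`. -/
noncomputable def Hu (g : Polynomial K) (d : ℕ) : Polynomial K :=
  ∑ i ∈ g.support, C (g.coeff i) * X ^ i * (X - 1) ^ (d - i)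

lemma Hu_eq_Hb_map (g : Polynomial K) (d : ℕ) :
    Hu g d = Hb (g.map (C : K →+* Polynomial K)) d := by
  unfold Hu Hb
  rw [support_map_of_injective g (C_injective)]
  exact Finset.sum_congr rfl fun i _ => by rw [coeff_map]

lemma algF_Hb (B : Polynomial (Polynomial K)) (d : ℕ) (hd : B.natDegree ≤ d) :
    algebraMap (Polynomial K) (RatFunc K) (Hb B d)
      = (RatFunc.X - 1) ^ d * Polynomial.eval₂ (algebraMap (Polynomial K) (RatFunc K))
          (RatFunc.X / (RatFunc.X - 1)) B := by
  rw [Polynomial.eval₂_eq_sum, Polynomial.sum_def, Hb, map_sum, Finset.mul_sum]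
  refine Finset.sum_congr rfl fun i hi => ?_
  have hi' : i ≤ d := le_trans (le_natDegree_of_mem_supp i hi) hd
  rw [map_mul, map_mul, map_pow, map_pow, map_sub, RatFunc.algebraMap_X, map_one, div_pow]
  field_simp [ratX1_ne]
  rw [mul_assoc, ← pow_add, Nat.sub_add_cancel hi']

lemma algF_Hu (g : Polynomial K) (d : ℕ) (hd : g.natDegree ≤ d) :
    algebraMap (Polynomial K) (RatFunc K) (Hu g d)
      = (RatFunc.X - 1) ^ d * Polynomial.eval₂ (RatFunc.C : K →+* RatFunc K)
          (RatFunc.X / (RatFunc.X - 1)) g := by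
  rw [Hu_eq_Hb_map, algF_Hb _ d (by rwa [natDegree_map_eq_of_injective C_injective]),
    eval₂_map]
  have h : (algebraMap (Polynomial K) (RatFunc K)).comp (C : K →+* Polynomial K) = RatFunc.C :=
    RingHom.ext fun a => RatFunc.algebraMap_C a
  rw [h]

lemma natDegree_Hu_le (g : Polynomial K) (d : ℕ) (hd : g.natDegree ≤ d) :
    (Hu g d).natDegree ≤ d := by
  refine natDegree_sum_le_of_forall_le _ _ fun i hi => ?_
  have hi' : i ≤ d := le_trans (le_natDegree_of_mem_supp i hi) hd
  calc (C (g.coeff i) * X ^ i * (X - 1) ^ (d - i)).natDegree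
      ≤ (C (g.coeff i) * X ^ i).natDegree + ((X - 1 : Polynomial K) ^ (d - i)).natDegree :=
        natDegree_mul_le
    _ ≤ (0 + i) + (d - i) * 1 := by
        gcongr
        · exact le_trans natDegree_mul_le (by simp)
        · exact le_trans (natDegree_pow_le) (by
            gcongr
            simpa using natDegree_X_sub_C_le (1 : K))
    _ ≤ d := by omega

end Aux

section Aux2
variable {K : Type*} [Field K]

lemma monic_XX (i j : ℕ) : ((X : Polynomial K) ^ i * (X - 1) ^ j).Monic := by
  have h1 : ((X : Polynomial K) - 1).Monic := by simpa using monic_X_sub_C (1 : K)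
  exact (monic_X_pow i).mul (h1.pow j)

lemma natDegree_XX (i j : ℕ) : ((X : Polynomial K) ^ i * (X - 1) ^ j).natDegree = i + j := by
  have h1 : ((X : Polynomial K) - 1).Monic := by simpa using monic_X_sub_C (1 : K)
  rw [(monic_X_pow i).natDegree_mul (h1.pow j), natDegree_X_pow, h1.natDegree_pow]
  have : ((X : Polynomial K) - 1).natDegree = 1 := by simpa using natDegree_X_sub_C (1 : K)
  rw [this, mul_one]

lemma tsub1 : (RatFunc.X / (RatFunc.X - 1) - 1 : RatFunc K) = 1 / (RatFunc.X - 1) := by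
  rw [div_sub_one ratX1_ne]
  congr 1
  ring

lemma Hu_invol (g : Polynomial K) (d : ℕ) (hd : g.natDegree ≤ d) : Hu (Hu g d) d = g := by
  apply RatFunc.algebraMap_injective K
  rw [algF_Hu _ d (natDegree_Hu_le g d hd)]
  conv_lhs => rw [Hu, Polynomial.eval₂_finset_sum, Finset.mul_sum]
  conv_rhs => rw [← sum_C_mul_X_pow_eq g, Polynomial.sum_def, map_sum]
  refine Finset.sum_congr rfl fun i hi => ?_
  have hi' : i ≤ d := le_trans (le_natDegree_of_mem_supp i hi) hd
  rw [eval₂_mul, eval₂_mul, eval₂_C, eval₂_X_pow, eval₂_pow, eval₂_sub, eval₂_X, eval₂_one,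
    tsub1, div_pow, div_pow, one_pow, map_mul, map_pow, RatFunc.algebraMap_C,
    RatFunc.algebraMap_X]
  field_simp [ratX1_ne]
  rw [mul_assoc _ ((RatFunc.X - 1 : RatFunc K) ^ i), ← pow_add, Nat.add_sub_cancel' hi']
  ring

lemma Hu_mono (a : K) (i j d : ℕ) (hij : i + j ≤ d) :
    Hu (C a * X ^ i * (X - 1) ^ j) d = C a * X ^ i * (X - 1) ^ (d - i - j) := by
  have hdeg : (C a * X ^ i * (X - 1) ^ j).natDegree ≤ d := by
    rcases eq_or_ne a 0 with rfl | ha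
    · simp
    · rw [mul_assoc, natDegree_C_mul ha, natDegree_XX]; exact hij
  apply RatFunc.algebraMap_injective K
  rw [algF_Hu _ d hdeg]
  rw [eval₂_mul, eval₂_mul, eval₂_C, eval₂_X_pow, eval₂_pow, eval₂_sub, eval₂_X, eval₂_one,
    tsub1, div_pow, div_pow, one_pow, map_mul, map_mul, map_pow, map_pow, RatFunc.algebraMap_C,
    RatFunc.algebraMap_X, map_sub, RatFunc.algebraMap_X, map_one]
  field_simp [ratX1_ne]
  have hp : (RatFunc.X - 1 : RatFunc K) ^ (d - i - j) * (RatFunc.X - 1) ^ (i + j)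
      = (RatFunc.X - 1) ^ d := by
    rw [← pow_add]; congr 1; omega
  linear_combination (-(RatFunc.C a * RatFunc.X ^ i)) * hp
end Aux2

lemma bryl_key (R : Type*) [CommRing R] [IsDomain R] (n : ℕ) (r : ℤ) (c : R) (hc : c ≠ 0)
    (U V W : Polynomial (Polynomial R)) (hU : IsBrylawski R n r c U) (hUVW : U = V * W) :
    brylEval R V ≠ 0 ∧ ∃ (e : FractionRing R) (i j : ℕ), e ≠ 0 ∧
      Hb (V.map (Polynomial.mapRingHom (algebraMap R (FractionRing R))))
        (V.map (Polynomial.mapRingHom (algebraMap R (FractionRing R)))).natDegree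
        = C e * X ^ i * (X - 1) ^ j := by
  set K := FractionRing R
  have hU' : (RatFunc.X - 1 : RatFunc K) ^ r * brylEval R U
      = RatFunc.C (algebraMap R K c) * RatFunc.X ^ n := hU
  have hc' : algebraMap R K c ≠ 0 :=
    fun h => hc (IsFractionRing.injective R K (by simpa using h))
  have hCc : RatFunc.C (algebraMap R K c) ≠ 0 := by
    rw [← RatFunc.algebraMap_C]
    exact (map_ne_zero_iff _ (RatFunc.algebraMap_injective K)).mpr (C_ne_zero.mpr hc')
  have hX1 : (RatFunc.X - 1 : RatFunc K) ≠ 0 := ratX1_ne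
  have hXn : (RatFunc.X : RatFunc K) ^ n ≠ 0 := pow_ne_zero n (by
    rw [← RatFunc.algebraMap_X]
    exact (map_ne_zero_iff _ (RatFunc.algebraMap_injective K)).mpr X_ne_zero)
  have heU : brylEval R U ≠ 0 := by
    intro h
    rw [h, mul_zero] at hU'
    exact (mul_ne_zero hCc hXn) hU'.symm
  have hmul : brylEval R U = brylEval R V * brylEval R W := by
    rw [hUVW]; exact Polynomial.eval₂_mul _ _
  have heV : brylEval R V ≠ 0 := fun h => heU (by rw [hmul, h, zero_mul])
  have heW : brylEval R W ≠ 0 := fun h => heU (by rw [hmul, h, mul_zero])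
  refine ⟨heV, ?_⟩
  have hbE : ∀ P : Polynomial (Polynomial R), brylEval R P
      = Polynomial.eval₂ (algebraMap (Polynomial K) (RatFunc K)) (RatFunc.X / (RatFunc.X - 1))
        (P.map (Polynomial.mapRingHom (algebraMap R K))) :=
    fun P => (Polynomial.eval₂_map _ _ _).symm
  set VK := V.map (Polynomial.mapRingHom (algebraMap R K)) with hVKdef
  set WK := W.map (Polynomial.mapRingHom (algebraMap R K)) with hWKdef
  set dV := VK.natDegree with hdV
  set dW := WK.natDegree with hdW
  have hEV : algebraMap (Polynomial K) (RatFunc K) (Hb VK dV)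
      = (RatFunc.X - 1) ^ dV * brylEval R V := by
    rw [algF_Hb VK dV le_rfl, hbE V]
  have hEW : algebraMap (Polynomial K) (RatFunc K) (Hb WK dW)
      = (RatFunc.X - 1) ^ dW * brylEval R W := by
    rw [algF_Hb WK dW le_rfl, hbE W]
  obtain ⟨N, M, hNM⟩ : ∃ N M : ℕ, ((dV : ℤ) + dW + N) = M + r :=
    ⟨(r - dV - dW).toNat, (dV + dW - r).toNat, by omega⟩
  have hzp : ((RatFunc.X - 1 : RatFunc K) ^ (dV + dW + N : ℕ))
      = (RatFunc.X - 1) ^ (M : ℕ) * (RatFunc.X - 1) ^ r := by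
    rw [← zpow_natCast (RatFunc.X - 1 : RatFunc K), ← zpow_natCast (RatFunc.X - 1 : RatFunc K) M,
      ← zpow_add₀ hX1]
    congr 1
  have hpoly : Hb VK dV * Hb WK dW * (X - 1) ^ N
      = C (algebraMap R K c) * X ^ n * (X - 1) ^ M := by
    apply RatFunc.algebraMap_injective K
    rw [map_mul, map_mul, hEV, hEW, map_pow, map_sub, RatFunc.algebraMap_X, map_one,
      map_mul, map_mul, map_pow, map_pow, RatFunc.algebraMap_C, RatFunc.algebraMap_X,
      map_sub, RatFunc.algebraMap_X, map_one]
    have h1 : (RatFunc.X - 1 : RatFunc K) ^ dV * brylEval R V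
        * ((RatFunc.X - 1) ^ dW * brylEval R W) * (RatFunc.X - 1) ^ N
        = (RatFunc.X - 1) ^ (dV + dW + N : ℕ) * brylEval R U := by
      rw [hmul, pow_add, pow_add]; ring
    rw [h1, hzp, mul_assoc, hU']
    ring
  have hdvd1 : Hb VK dV ∣ C (algebraMap R K c) * (X ^ n * (X - 1) ^ M) :=
    ⟨Hb WK dW * (X - 1) ^ N, by linear_combination -hpoly⟩
  have hu : IsUnit (C (algebraMap R K c) : Polynomial K) :=
    Polynomial.isUnit_C.mpr (isUnit_iff_ne_zero.mpr hc')
  have hdvd2 : Hb VK dV ∣ X ^ n * (X - 1) ^ M := (hu.dvd_mul_left).mp hdvd1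
  obtain ⟨d1, d2, h1, h2, h12⟩ := exists_dvd_and_dvd_of_dvd_mul hdvd2
  obtain ⟨i, hin, hass1⟩ := (dvd_prime_pow Polynomial.prime_X n).mp h1
  have hprime1 : Prime ((X : Polynomial K) - 1) := by
    simpa using Polynomial.prime_X_sub_C (1 : K)
  obtain ⟨j, hjM, hass2⟩ := (dvd_prime_pow hprime1 M).mp h2
  obtain ⟨u1, hu1⟩ := hass1.symm
  obtain ⟨u2, hu2⟩ := hass2.symm
  obtain ⟨e, heu, hCe⟩ := Polynomial.isUnit_iff.mp ((u1.isUnit).mul (u2.isUnit))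
  refine ⟨e, i, j, heu.ne_zero, ?_⟩
  rw [h12, ← hu1, ← hu2, hCe]
  ring

lemma Hb_C {K : Type*} [Field K] (q : Polynomial K) : Hb (C q) 0 = q := by
  rcases eq_or_ne q 0 with rfl | hq
  · simp [Hb]
  · rw [Hb, support_C hq, Finset.sum_singleton]
    simp

/-- Over a UFD `R`, any univariate divisor of an (n,r)-Brylawski polynomial
`U` is of the form `a·(x−1)^k·x^ℓ` (if it involves only `x`, i.e. `deg_y V = 0`) or
`b·(y−1)^k·y^ℓ` (if it involves only `y`, i.e. `deg_x V = 0`). -/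
theorem brylawski_univariate_factors (R : Type*) [CommRing R] [IsDomain R]
    [UniqueFactorizationMonoid R] (n : ℕ) (r : ℤ) (c : R) (hc : c ≠ 0)
    (U V : Polynomial (Polynomial R)) (hU : IsBrylawski R n r c U) (hdvd : V ∣ U) :
    (degY V = 0 → ∃ (a : R) (k ℓ : ℕ), a ≠ 0 ∧
        V = Polynomial.C (Polynomial.C a) * (Polynomial.X - 1) ^ k * Polynomial.X ^ ℓ) ∧
    (V.natDegree = 0 → ∃ (b : R) (k ℓ : ℕ), b ≠ 0 ∧
        V = Polynomial.C (Polynomial.C b * (Polynomial.X - 1) ^ k * Polynomial.X ^ ℓ)) := by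
  set K := FractionRing R with hK
  obtain ⟨W, hUVW⟩ := hdvd
  obtain ⟨heV, e, i, j, he, hHb⟩ := bryl_key R n r c hc U V W hU hUVW
  have halg : Function.Injective (algebraMap R K) := IsFractionRing.injective R K
  have hV0 : V ≠ 0 := fun h => heV (by simp [brylEval, h])
  set VK := V.map (Polynomial.mapRingHom (algebraMap R K)) with hVKdef
  constructor
  · -- deg_y V = 0
    intro hdegY
    have hcoe : ∀ m, (V.coeff m).natDegree = 0 := by
      intro m
      by_cases hm : m ∈ V.support
      · exact Nat.le_zero.mp (hdegY ▸ Finset.le_sup (f := fun i => (V.coeff i).natDegree) hm)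
      · rw [Polynomial.notMem_support_iff.mp hm, natDegree_zero]
    have hCm : ∀ m, Polynomial.C (Polynomial.eval 0 (V.coeff m)) = V.coeff m := by
      intro m
      obtain ⟨am, ham⟩ := natDegree_eq_zero.mp (hcoe m)
      rw [← ham, eval_C]
    obtain ⟨v, hvdef⟩ : ∃ v : Polynomial R, v = V.map (Polynomial.evalRingHom (0 : R)) :=
      ⟨_, rfl⟩
    have hVv : V = v.map (Polynomial.C : R →+* Polynomial R) := by
      rw [hvdef, Polynomial.map_map]
      refine Polynomial.ext fun m => ?_
      simp only [coeff_map, RingHom.coe_comp, Function.comp_apply, coe_evalRingHom]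
      exact (hCm m).symm
    obtain ⟨w, hwdef⟩ : ∃ w : Polynomial K, w = v.map (algebraMap R K) := ⟨_, rfl⟩
    have hVKw : VK = w.map (Polynomial.C : K →+* Polynomial K) := by
      rw [hVKdef, hVv, hwdef, Polynomial.map_map, Polynomial.map_map]
      congr 1
      refine RingHom.ext fun x => ?_
      simp
    have hwdeg : w.natDegree ≤ VK.natDegree := by
      rw [hVKw, natDegree_map_eq_of_injective C_injective]
    have hHu : Hu w VK.natDegree = C e * X ^ i * (X - 1) ^ j := by
      rw [Hu_eq_Hb_map, ← hVKw]; exact hHb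
    have hij : i + j ≤ VK.natDegree := by
      have h1 : (Hu w VK.natDegree).natDegree ≤ VK.natDegree := natDegree_Hu_le w _ hwdeg
      rwa [hHu, mul_assoc, natDegree_C_mul he, natDegree_XX] at h1
    have hw : w = C e * X ^ i * (X - 1) ^ (VK.natDegree - i - j) := by
      rw [← Hu_invol w VK.natDegree hwdeg, hHu, Hu_mono e i j _ hij]
    obtain ⟨a, hadef⟩ : ∃ a : R, a = v.leadingCoeff := ⟨_, rfl⟩
    have hlc : algebraMap R K a = e := by
      rw [hadef, ← leadingCoeff_map_of_injective halg v, ← hwdef, hw, mul_assoc, leadingCoeff_mul,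
        leadingCoeff_C, (monic_XX i _).leadingCoeff, mul_one]
    have ha : a ≠ 0 := fun h => he (by rw [← hlc, h, map_zero])
    have hv : v = C a * X ^ i * (X - 1) ^ (VK.natDegree - i - j) := by
      apply Polynomial.map_injective _ halg
      rw [Polynomial.map_mul, Polynomial.map_mul, Polynomial.map_pow, Polynomial.map_pow,
        Polynomial.map_sub, Polynomial.map_one, Polynomial.map_C, Polynomial.map_X, hlc,
        ← hwdef]
      exact hw
    refine ⟨a, VK.natDegree - i - j, i, ha, ?_⟩
    rw [hVv, hv]
    simp only [Polynomial.map_mul, Polynomial.map_pow, Polynomial.map_sub,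
      Polynomial.map_one, Polynomial.map_C, Polynomial.map_X]
    ring
  · -- natDegree V = 0
    intro hdeg
    obtain ⟨p, hVp⟩ : ∃ p : Polynomial R, V = C p :=
      ⟨V.coeff 0, (eq_C_of_natDegree_eq_zero hdeg)⟩
    have hp0 : p ≠ 0 := fun h => hV0 (by rw [hVp, h, map_zero])
    have hVKp : VK = C (p.map (algebraMap R K)) := by
      rw [hVKdef, hVp, Polynomial.map_C]
      rfl
    have hdv0 : VK.natDegree = 0 := by rw [hVKp, natDegree_C]
    rw [hdv0, hVKp, Hb_C] at hHb
    obtain ⟨b, hbdef⟩ : ∃ b : R, b = p.leadingCoeff := ⟨_, rfl⟩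
    have hlc : algebraMap R K b = e := by
      rw [hbdef, ← leadingCoeff_map_of_injective halg p, hHb, mul_assoc, leadingCoeff_mul,
        leadingCoeff_C, (monic_XX i j).leadingCoeff, mul_one]
    have hb : b ≠ 0 := fun h => he (by rw [← hlc, h, map_zero])
    have hp : p = C b * X ^ i * (X - 1) ^ j := by
      apply Polynomial.map_injective _ halg
      rw [Polynomial.map_mul, Polynomial.map_mul, Polynomial.map_pow, Polynomial.map_pow,
        Polynomial.map_sub, Polynomial.map_one, Polynomial.map_C, Polynomial.map_X, hlc]
      exact hHb
    refine ⟨b, j, i, hb, ?_⟩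
    rw [hVp, hp]
    congr 1
    ring
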